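/- Let f : ℝ → ℝ be twice continuously differentiable with bounded second derivative, let N be a positive integer, K ≥ 0, and let λ_1,…,λ_N ∈ [0,∞), β_1,…,β_N ∈ [0,K], and m_1,…,m_N ∈ {0,1}. Define 𝒥_n = (1/N)·∑_{n'=1}^N ( f(λ_{n'} + β_{n'}/N) − f(λ_{n'}) )·m_{n'} − (1/N)·f(λ_n), and set A = ∑_{n=1}^N λ_n 𝒥_n m_n − [ ((1/N)∑_{n=1}^N λ_n m_n)·((1/N)∑_{n=1}^N β_n f′(λ_n) m_n) − (1/N)∑_{n=1}^N λ_n f(λ_n) m_n ]. Then |A| ≤ (K²·sup_{x∈ℝ}|f″(x)| / N) · ( (1/N)·∑_{n=1}^N λ_n ). -/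

import Mathlib

open scoped BigOperators

lemma taylor_aux (f : ℝ → ℝ) (hf : ContDiff ℝ 2 f) (M : ℝ)
    (hM : ∀ t, |iteratedDeriv 2 f t| ≤ M) (x h : ℝ) (hh : 0 ≤ h) :
    |f (x + h) - f x - h * deriv f x| ≤ M * h ^ 2 := by
  have hM0 : 0 ≤ M := le_trans (abs_nonneg _) (hM 0)
  have hf1 : ContDiff ℝ 1 (deriv f) := by
    exact (contDiff_succ_iff_deriv.mp (show ContDiff ℝ (1 + 1) f by norm_num [hf])).2.2
  have hd1 : Differentiable ℝ f := hf.differentiable (by norm_num)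
  have hd2 : Differentiable ℝ (deriv f) := hf1.differentiable (by norm_num)
  have hit : ∀ t, iteratedDeriv 2 f t = deriv (deriv f) t := by
    intro t; simp [iteratedDeriv_succ, iteratedDeriv_one]
  -- Lipschitz bound on deriv f
  have hlip : ∀ a b : ℝ, |deriv f b - deriv f a| ≤ M * |b - a| := by
    intro a b
    have := Convex.norm_image_sub_le_of_norm_hasDerivWithin_le
      (f := deriv f) (f' := fun t => iteratedDeriv 2 f t) (s := Set.univ) (C := M)
      (fun t _ => by
        show HasDerivWithinAt _ (iteratedDeriv 2 f t) _ _
        rw [hit t]; exact (hd2 t).hasDerivAt.hasDerivWithinAt)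
      (fun t _ => by simpa using hM t) convex_univ (Set.mem_univ a) (Set.mem_univ b)
    simpa [Real.norm_eq_abs] using this
  -- apply MVT-type bound to g t = f t - deriv f x * t on [x, x+h]
  have key := Convex.norm_image_sub_le_of_norm_hasDerivWithin_le
    (f := fun t => f t - deriv f x * t) (f' := fun t => deriv f t - deriv f x)
    (s := Set.Icc x (x + h)) (C := M * h)
    (fun t _ => (((hd1 t).hasDerivAt).sub
        ((hasDerivAt_id t).const_mul (deriv f x))).hasDerivWithinAt.congr_deriv (by ring))
    (fun t ht => by
      have h1 : |deriv f t - deriv f x| ≤ M * |t - x| := hlip x t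
      have h2 : |t - x| ≤ h := by
        rw [abs_of_nonneg (by linarith [ht.1])]; linarith [ht.2]
      calc ‖deriv f t - deriv f x‖ ≤ M * |t - x| := h1
        _ ≤ M * h := by nlinarith)
    (convex_Icc _ _) (Set.left_mem_Icc.mpr (by linarith)) (Set.right_mem_Icc.mpr (by linarith))
  have : ‖(f (x + h) - deriv f x * (x + h)) - (f x - deriv f x * x)‖ ≤ M * h * ‖x + h - x‖ := key
  rw [Real.norm_eq_abs, Real.norm_eq_abs] at this
  have e : (f (x + h) - deriv f x * (x + h)) - (f x - deriv f x * x)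
      = f (x + h) - f x - h * deriv f x := by ring
  rw [e] at this
  calc |f (x + h) - f x - h * deriv f x| ≤ M * h * |x + h - x| := this
    _ = M * h ^ 2 := by rw [show x + h - x = h by ring, abs_of_nonneg hh]; ring

/-- deterministic core of the first bound in Lemma 6.1 — the drift
error term `Â^N[f]` arising from replacing the jump terms by their linearization. -/
theorem drift_error_term_estimate
    (f : ℝ → ℝ) (hf : ContDiff ℝ 2 f)
    (hbdd : BddAbove (Set.range fun x => |iteratedDeriv 2 f x|))
    (N : ℕ) (hN : 0 < N) (K : ℝ) (hK : 0 ≤ K)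
    (lam β m : Fin N → ℝ)
    (hlam : ∀ n, 0 ≤ lam n)
    (hβ : ∀ n, β n ∈ Set.Icc (0 : ℝ) K)
    (hm : ∀ n, m n = 0 ∨ m n = 1) :
    |(∑ n, lam n *
          ((1 / (N : ℝ)) * ∑ n', (f (lam n' + β n' / N) - f (lam n')) * m n'
            - (1 / (N : ℝ)) * f (lam n)) * m n)
      - (((1 / (N : ℝ)) * ∑ n, lam n * m n) *
            ((1 / (N : ℝ)) * ∑ n, β n * deriv f (lam n) * m n)
          - (1 / (N : ℝ)) * ∑ n, lam n * f (lam n) * m n)|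
    ≤ (K ^ 2 * (⨆ x, |iteratedDeriv 2 f x|) / (N : ℝ)) *
        ((1 / (N : ℝ)) * ∑ n, lam n) := by
  set M : ℝ := ⨆ x, |iteratedDeriv 2 f x| with hMdef
  have hMle : ∀ t, |iteratedDeriv 2 f t| ≤ M := fun t => le_ciSup hbdd t
  have hM0 : 0 ≤ M := le_trans (abs_nonneg _) (hMle 0)
  have hNpos : (0 : ℝ) < N := by exact_mod_cast hN
  set S : ℝ := ∑ n', (f (lam n' + β n' / N) - f (lam n')) * m n' with hS
  -- algebraic identity
  have key : (∑ n, lam n *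
          ((1 / (N : ℝ)) * ∑ n', (f (lam n' + β n' / N) - f (lam n')) * m n'
            - (1 / (N : ℝ)) * f (lam n)) * m n)
      - (((1 / (N : ℝ)) * ∑ n, lam n * m n) *
            ((1 / (N : ℝ)) * ∑ n, β n * deriv f (lam n) * m n)
          - (1 / (N : ℝ)) * ∑ n, lam n * f (lam n) * m n)
      = ((1 / (N : ℝ)) * ∑ n, lam n * m n) *
          (∑ n, (f (lam n + β n / N) - f (lam n) - β n / (N : ℝ) * deriv f (lam n)) * m n) := by
    have e1 : (∑ n : Fin N, lam n *
          ((1 / (N : ℝ)) * S - (1 / (N : ℝ)) * f (lam n)) * m n)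
        = (∑ n : Fin N, lam n * m n) * ((1 / (N : ℝ)) * S)
          - (1 / (N : ℝ)) * ∑ n, lam n * f (lam n) * m n := by
      calc (∑ n : Fin N, lam n * ((1 / (N : ℝ)) * S - (1 / (N : ℝ)) * f (lam n)) * m n)
          = ∑ n : Fin N, (lam n * m n * ((1 / (N : ℝ)) * S)
              - (1 / (N : ℝ)) * (lam n * f (lam n) * m n)) :=
            Finset.sum_congr rfl fun n _ => by ring
        _ = (∑ n : Fin N, lam n * m n) * ((1 / (N : ℝ)) * S)
            - (1 / (N : ℝ)) * ∑ n, lam n * f (lam n) * m n := by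
            rw [Finset.sum_sub_distrib, ← Finset.sum_mul, ← Finset.mul_sum]
    have e2 : (∑ n : Fin N, (f (lam n + β n / N) - f (lam n) - β n / (N : ℝ) * deriv f (lam n)) * m n)
        = S - (1 / (N : ℝ)) * ∑ n, β n * deriv f (lam n) * m n := by
      rw [hS, Finset.mul_sum, ← Finset.sum_sub_distrib]
      exact Finset.sum_congr rfl fun n _ => by field_simp
    rw [e1, e2]; ring
  rw [key, abs_mul]
  -- bounds on pieces
  have hm01 : ∀ n, 0 ≤ m n ∧ m n ≤ 1 := fun n => by rcases hm n with h | h <;> simp [h]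
  have hc0 : 0 ≤ (1 / (N : ℝ)) * ∑ n, lam n * m n := by
    apply mul_nonneg (by positivity)
    exact Finset.sum_nonneg fun n _ => mul_nonneg (hlam n) (hm01 n).1
  have hcle : (1 / (N : ℝ)) * ∑ n, lam n * m n ≤ (1 / (N : ℝ)) * ∑ n, lam n := by
    apply mul_le_mul_of_nonneg_left _ (by positivity)
    exact Finset.sum_le_sum fun n _ => by
      nlinarith [(hm01 n).1, (hm01 n).2, hlam n]
  have hT : |∑ n : Fin N, (f (lam n + β n / N) - f (lam n) - β n / (N : ℝ) * deriv f (lam n)) * m n|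
      ≤ K ^ 2 * M / (N : ℝ) := by
    calc |∑ n : Fin N, (f (lam n + β n / N) - f (lam n) - β n / (N : ℝ) * deriv f (lam n)) * m n|
        ≤ ∑ n : Fin N, |(f (lam n + β n / N) - f (lam n) - β n / (N : ℝ) * deriv f (lam n)) * m n| :=
          Finset.abs_sum_le_sum_abs _ _
      _ ≤ ∑ _n : Fin N, K ^ 2 * M / (N : ℝ) ^ 2 := by
          apply Finset.sum_le_sum
          intro n _
          have hb := hβ n
          have hβN : 0 ≤ β n / (N : ℝ) := div_nonneg hb.1 hNpos.le
          have htay := taylor_aux f hf M hMle (lam n) (β n / (N : ℝ)) hβN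
          rw [abs_mul]
          have hmabs : |m n| ≤ 1 := by rcases hm n with h | h <;> simp [h]
          calc |f (lam n + β n / N) - f (lam n) - β n / (N : ℝ) * deriv f (lam n)| * |m n|
              ≤ (M * (β n / (N : ℝ)) ^ 2) * 1 := by
                apply mul_le_mul htay hmabs (abs_nonneg _) (by positivity)
            _ ≤ K ^ 2 * M / (N : ℝ) ^ 2 := by
                have hb2' : β n ^ 2 ≤ K ^ 2 := by nlinarith [hb.1, hb.2]
                have hb2 : M * β n ^ 2 ≤ K ^ 2 * M :=
                  le_trans (mul_le_mul_of_nonneg_left hb2' hM0) (le_of_eq (mul_comm _ _))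
                have e : M * (β n / (N : ℝ)) ^ 2 * 1 = (M * β n ^ 2) / (N : ℝ) ^ 2 := by
                  rw [mul_one, div_pow]; ring
                rw [e]
                gcongr
      _ = K ^ 2 * M / (N : ℝ) := by
          rw [Finset.sum_const, Finset.card_univ, Fintype.card_fin, nsmul_eq_mul]
          field_simp
  calc |(1 / (N : ℝ)) * ∑ n, lam n * m n| *
        |∑ n : Fin N, (f (lam n + β n / N) - f (lam n) - β n / (N : ℝ) * deriv f (lam n)) * m n|
      ≤ ((1 / (N : ℝ)) * ∑ n, lam n) * (K ^ 2 * M / (N : ℝ)) := by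
        rw [abs_of_nonneg hc0]
        exact mul_le_mul hcle hT (abs_nonneg _) (le_trans hc0 hcle)
    _ = (K ^ 2 * M / (N : ℝ)) * ((1 / (N : ℝ)) * ∑ n, lam n) := by ring
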